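/- Let T be a local net-tree with parameters (τ, c_p, c_c) and relative constant c_r > c_c·τ/(τ−1) on a point set P in a metric space M. For any q ∈ M, if the center of q is a node p^ℓ (the node minimizing (d(q,·), level) lexicographically among nodes x^m with d(q,x) ≤ c_r·τ^m), then d(p, q) < (c_r·τ(τ−1)/(c_r(τ−1) − c_c·τ)) · d(q, P), i.e., p is a (c_rτ(τ−1)/(c_r(τ−1)−c_cτ))-approximate nearest neighbor of q in P. -/

import Mathlib

/-- If the center of a query point `q ∉ P` in a local net-tree (with relative constant
`c_r > c_c·τ/(τ-1)`) is the node `p^ℓ`, then `p` is a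
`(c_r·τ(τ-1)/(c_r(τ-1) - c_c·τ))`-approximate nearest neighbor of `q` in `P`.
Here `T x m` means the point `x` has a node spanning level `m` (so `x ∈ N_m`),
the center minimizes `(d(q,·), level)` lexicographically among nodes `x^m` with
`d(q,x) ≤ c_r·τ^m`, and the covering property gives `d_H(N_{m-1}, P) ≤ c_c·τ^m/(τ-1)`. -/
theorem center_is_ANN {M : Type*} [MetricSpace M]
    (τ c_c c_r : ℝ) (hτ : 1 < τ) (hcc : 0 < c_c)
    (hcr : c_c * τ / (τ - 1) < c_r)
    (P : Set M) (hPfin : P.Finite) (hPne : P.Nonempty)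
    (T : M → ℤ → Prop)
    (hTP : ∀ x m, T x m → x ∈ P)
    -- `N_m` is downward closed: a point at level `≥ m` is at level `≥ m'` for `m' ≤ m`
    (hdown : ∀ x (m m' : ℤ), m' ≤ m → T x m → T x m')
    -- every point of `P` appears in some level
    (hsome : ∀ x ∈ P, ∃ m : ℤ, T x m)
    -- Hausdorff covering: every point of `P` is within `c_c·τ^m/(τ-1)` of `N_{m-1}`
    (hH : ∀ (m : ℤ), ∀ x ∈ P, ∃ y, T y (m - 1) ∧ dist x y ≤ c_c * τ ^ m / (τ - 1))
    (q : M) (hq : q ∉ P)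
    (p : M) (ℓ : ℤ)
    -- `p^ℓ` is the center of `q`
    (hnode : T p ℓ) (hin : dist q p ≤ c_r * τ ^ ℓ)
    (hmin : ∀ x (m : ℤ), T x m → dist q x ≤ c_r * τ ^ m →
      dist q p < dist q x ∨ (dist q p = dist q x ∧ ℓ ≤ m)) :
    dist p q < (c_r * τ * (τ - 1) / (c_r * (τ - 1) - c_c * τ)) * Metric.infDist q P := by
  set δ := Metric.infDist q P with hδdef
  have hτ0 : (0:ℝ) < τ := by linarith
  have hτ1 : (0:ℝ) < τ - 1 := by linarith
  have hden : 0 < c_r * (τ - 1) - c_c * τ := by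
    rw [div_lt_iff₀ hτ1] at hcr; linarith
  have hδpos : 0 < δ :=
    (hPfin.isClosed.notMem_iff_infDist_pos hPne).mp hq
  set a := c_r - c_c * τ / (τ - 1) with hadef
  have ha : 0 < a := by rw [hadef]; linarith [hcr]
  have haden : a * (τ - 1) = c_r * (τ - 1) - c_c * τ := by
    rw [hadef, sub_mul, div_mul_cancel₀ _ hτ1.ne']
  -- existence of some level with δ ≤ a * τ^(m-1)
  have hex : ∃ m : ℤ, δ ≤ a * τ ^ (m - 1) := by
    obtain ⟨n, hn⟩ := pow_unbounded_of_one_lt (δ / a) hτ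
    refine ⟨(n : ℤ) + 1, ?_⟩
    rw [div_lt_iff₀ ha] at hn
    rw [show ((n:ℤ) + 1 - 1) = (n:ℤ) by ring, zpow_natCast]
    nlinarith
  have hbdd : ∃ b : ℤ, ∀ z : ℤ, δ ≤ a * τ ^ (z - 1) → b ≤ z := by
    obtain ⟨n, hn⟩ := pow_unbounded_of_one_lt (a / δ) hτ
    refine ⟨1 - (n : ℤ), fun z hz => ?_⟩
    by_contra hlt
    push_neg at hlt
    have h1 : (n : ℤ) ≤ 1 - z - 1 := by omega
    have h2 : (τ : ℝ) ^ (n : ℤ) ≤ τ ^ (1 - z - 1) := zpow_le_zpow_right₀ hτ.le h1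
    rw [zpow_natCast] at h2
    have h3 : a / δ < τ ^ ((1:ℤ) - z - 1) := lt_of_lt_of_le hn h2
    have h4 : τ ^ ((1:ℤ) - z - 1) * τ ^ (z - 1) = τ ^ (-1 : ℤ) := by
      rw [← zpow_add₀ (ne_of_gt hτ0)]; congr 1; ring
    have h5 : (0:ℝ) < τ ^ (z - 1) := zpow_pos hτ0 _
    have h6 : a * τ ^ (z - 1) < δ * (τ ^ ((1:ℤ) - z - 1) * τ ^ (z - 1)) := by
      rw [div_lt_iff₀ hδpos] at h3
      calc a * τ ^ (z - 1) < τ ^ ((1:ℤ) - z - 1) * δ * τ ^ (z - 1) :=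
            mul_lt_mul_of_pos_right h3 h5
      _ = δ * (τ ^ ((1:ℤ) - z - 1) * τ ^ (z - 1)) := by ring
    rw [h4] at h6
    have h7 : (τ:ℝ) ^ (-1 : ℤ) < 1 := by
      rw [zpow_neg_one]; rw [inv_lt_one_iff₀]; right; exact hτ
    nlinarith
  classical
  obtain ⟨m, hm, hleast⟩ := Int.exists_least_of_bdd
    (P := fun z => δ ≤ a * τ ^ (z - 1)) (by obtain ⟨b, hb⟩ := hbdd; exact ⟨b, hb⟩) hex
  have hmlt : a * τ ^ (m - 2) < δ := by
    by_contra h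
    push_neg at h
    have := hleast (m - 1) (by rw [show m - 1 - 1 = m - 2 by ring]; exact h)
    omega
  -- nearest neighbor x
  obtain ⟨x, hxP, hxd⟩ := hPfin.isCompact.exists_infDist_eq_dist hPne q
  -- covering point y near x at level m-1
  obtain ⟨y, hyT, hyd⟩ := hH m x hxP
  have hτm : τ ^ m = τ ^ (m - 1) * τ := by
    rw [← zpow_add_one₀ (ne_of_gt hτ0)]; ring_nf
  have hτm2 : τ ^ m = τ ^ (m - 2) * τ ^ 2 := by
    rw [← zpow_natCast τ 2, ← zpow_add₀ (ne_of_gt hτ0)]; norm_num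
  have hqy : dist q y ≤ c_r * τ ^ (m - 1) := by
    have h1 : dist q y ≤ dist q x + dist x y := dist_triangle q x y
    have h2 : δ + c_c * τ ^ m / (τ - 1) ≤ c_r * τ ^ (m - 1) := by
      have hmm : δ ≤ a * τ ^ (m - 1) := hm
      have : c_c * τ ^ m / (τ - 1) = c_c * τ / (τ - 1) * τ ^ (m - 1) := by
        rw [hτm]; ring
      rw [this]
      calc δ + c_c * τ / (τ - 1) * τ ^ (m - 1)
          ≤ a * τ ^ (m - 1) + c_c * τ / (τ - 1) * τ ^ (m - 1) :=
            add_le_add hmm le_rfl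
      _ = c_r * τ ^ (m - 1) := by rw [hadef]; ring
    calc dist q y ≤ dist q x + dist x y := h1
    _ ≤ δ + c_c * τ ^ m / (τ - 1) := by rw [← hxd] at *; linarith
    _ ≤ c_r * τ ^ (m - 1) := h2
  have hkey : dist q p ≤ δ + c_c * τ ^ m / (τ - 1) := by
    have hqp : dist q p ≤ dist q y := by
      rcases hmin y (m - 1) hyT hqy with h | ⟨h, _⟩
      · exact h.le
      · exact h.le
    calc dist q p ≤ dist q y := hqp
    _ ≤ dist q x + dist x y := dist_triangle q x y
    _ ≤ δ + c_c * τ ^ m / (τ - 1) := by rw [← hxd] at *; linarith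
  -- final algebra
  rw [dist_comm p q]
  set s := (τ : ℝ) ^ (m - 2) with hsdef
  have hs : 0 < s := zpow_pos hτ0 _
  have hkey' : dist q p * (τ - 1) ≤ δ * (τ - 1) + c_c * (s * τ ^ 2) := by
    rw [← hτm2]
    have h2 : c_c * τ ^ m / (τ - 1) * (τ - 1) = c_c * τ ^ m := by field_simp
    nlinarith [mul_le_mul_of_nonneg_right hkey hτ1.le]
  have hmlt' : (c_r * (τ - 1) - c_c * τ) * s < δ * (τ - 1) := by
    rw [← haden]
    nlinarith [hmlt]
  rw [div_mul_eq_mul_div, lt_div_iff₀ hden]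
  nlinarith [mul_le_mul_of_nonneg_right hkey' hden.le,
    mul_lt_mul_of_pos_left hmlt' (by positivity : (0:ℝ) < c_c * τ ^ 2),
    mul_pos hδpos hτ1, mul_pos hden hτ1, hτ1, hδpos]
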